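/- Let Ω ⊆ ℝ³ be an open set, T > 0, ε > 0 and μ > 0. Let u : ℝ × ℝ³ → ℝ³ and p : ℝ × ℝ³ → ℝ be C² functions such that there is a compact set K ⊂ Ω with u(t,x) = 0 and p(t,x) = 0 for all t ∈ [0,T] and all x ∉ K, and such that on [0,T] × Ω they satisfy the artificial compressibility system ∂ₜu + ∇p = μΔu − (u·∇)u − (1/2)(div u)u and ε ∂ₜp + div u = 0. Define the energy E(t) = ∫_Ω ( (1/2)|u(t,x)|² + (ε/2)|p(t,x)|² ) dx. Then for all t ∈ [0,T] one has the energy identity E(t) + μ ∫₀ᵗ ∫_Ω |∇u(s,x)|² dx ds = E(0). -/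

import Mathlib

open MeasureTheory Metric Set

noncomputable section
local notation "E3" => EuclideanSpace ℝ (Fin 3)

variable {F : Type*} [NormedAddCommGroup F] [NormedSpace ℝ F]

lemma hasFDerivAt_pair_right (t : ℝ) (x : E3) :
    HasFDerivAt (fun y : E3 => ((t, y) : ℝ × E3)) (ContinuousLinearMap.inr ℝ ℝ (EuclideanSpace ℝ (Fin 3))) x := by
  have := HasFDerivAt.prodMk (hasFDerivAt_const (𝕜 := ℝ) t x) (hasFDerivAt_id (𝕜 := ℝ) x)
  exact this

lemma slice_space {w : ℝ × E3 → F} {t : ℝ} {x : E3} (hw : DifferentiableAt ℝ w (t, x)) :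
    HasFDerivAt (fun y => w (t, y))
      ((fderiv ℝ w (t, x)).comp (ContinuousLinearMap.inr ℝ ℝ (EuclideanSpace ℝ (Fin 3)))) x :=
  (hw.hasFDerivAt).comp x (hasFDerivAt_pair_right t x)

lemma fderiv_slice_space {w : ℝ × E3 → F} {t : ℝ} {x : E3} (hw : DifferentiableAt ℝ w (t, x))
    (e : E3) : fderiv ℝ (fun y => w (t, y)) x e = fderiv ℝ w (t, x) (0, e) := by
  rw [(slice_space hw).fderiv]; simp

lemma slice_time {w : ℝ × E3 → F} {t : ℝ} {x : E3} (hw : DifferentiableAt ℝ w (t, x)) :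
    HasDerivAt (fun s => w (s, x)) (fderiv ℝ w (t, x) (1, 0)) t :=
  (hw.hasFDerivAt).comp_hasDerivAt t (HasDerivAt.prodMk (hasDerivAt_id t) (hasDerivAt_const t x))

local notation "e" j => EuclideanSpace.single j (1:ℝ)

-- continuity of a parametric integral over compact K of a continuous integrand
lemma cont_param_integral {g : ℝ × E3 → ℝ} (hg : Continuous g)
    {K : Set E3} (hK : IsCompact K) :
    Continuous fun t => ∫ x in K, g (t, x) := by
  rw [continuous_iff_continuousAt]
  intro t₀
  obtain ⟨C, hC⟩ : ∃ C, ∀ y ∈ (Metric.closedBall t₀ 1) ×ˢ K, ‖g y‖ ≤ C := by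
    rcases ((isCompact_closedBall t₀ 1).prod hK).exists_bound_of_continuousOn
      hg.norm.continuousOn with ⟨C, hC⟩
    exact ⟨C, fun y hy => by simpa using hC y hy⟩
  apply continuousAt_of_dominated (bound := fun _ => C)
  · exact Filter.Eventually.of_forall fun t =>
      (hg.comp (continuous_const.prodMk continuous_id)).aestronglyMeasurable
  · filter_upwards [Metric.closedBall_mem_nhds t₀ one_pos] with t ht
    refine (ae_restrict_iff' hK.measurableSet).2 (Filter.Eventually.of_forall fun x hx => ?_)
    exact hC (t, x) ⟨ht, hx⟩
  · exact (integrableOn_const (hK.measure_lt_top (μ := volume)).ne : IntegrableOn (fun _ => C) K volume)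
  · exact Filter.Eventually.of_forall fun x =>
      (hg.comp (continuous_id.prodMk continuous_const)).continuousAt

lemma hasDerivAt_param_integral {g g' : ℝ × E3 → ℝ} (hg : Continuous g) (hg' : Continuous g')
    {K : Set E3} (hK : IsCompact K)
    (hdiff : ∀ t x, HasDerivAt (fun s => g (s, x)) (g' (t, x)) t) (t₀ : ℝ) :
    HasDerivAt (fun t => ∫ x in K, g (t, x)) (∫ x in K, g' (t₀, x)) t₀ := by
  obtain ⟨C, hC⟩ : ∃ C, ∀ y ∈ (Metric.closedBall t₀ 1) ×ˢ K, ‖g' y‖ ≤ C := by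
    rcases ((isCompact_closedBall t₀ 1).prod hK).exists_bound_of_continuousOn
      hg'.norm.continuousOn with ⟨C, hC⟩
    exact ⟨C, fun y hy => by simpa using hC y hy⟩
  have key := hasDerivAt_integral_of_dominated_loc_of_deriv_le
    (F := fun t x => g (t, x)) (F' := fun t x => g' (t, x))
    (μ := volume.restrict K) (bound := fun _ => C) (x₀ := t₀) (s := Metric.ball t₀ 1) (Metric.ball_mem_nhds t₀ one_pos)
    (Filter.Eventually.of_forall fun t =>
      (hg.comp (continuous_const.prodMk continuous_id)).aestronglyMeasurable)
    ((hg.comp (continuous_const.prodMk continuous_id)).continuousOn.integrableOn_compact hK)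
    (hg'.comp (continuous_const.prodMk continuous_id)).aestronglyMeasurable
    ?_ (integrableOn_const (hK.measure_lt_top (μ := volume)).ne :
        IntegrableOn (fun _ => C) K volume)
    (Filter.Eventually.of_forall fun x => fun t _ => hdiff t x)
  · exact key.2
  · refine (ae_restrict_iff' hK.measurableSet).2 (Filter.Eventually.of_forall fun x hx t ht => ?_)
    exact hC (t, x) ⟨Metric.ball_subset_closedBall ht, hx⟩

lemma fderiv_proj {U : E3 → E3} {x : E3} (hU : DifferentiableAt ℝ U x) (i : Fin 3) (v : E3) :
    fderiv ℝ (fun x => U x i) x v = fderiv ℝ U x v i := by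
  have : HasFDerivAt (fun x => U x i)
      ((EuclideanSpace.proj i).comp (fderiv ℝ U x)) x :=
    ((EuclideanSpace.proj i).hasFDerivAt.comp x hU.hasFDerivAt :
      HasFDerivAt ((EuclideanSpace.proj i) ∘ U) _ x)
  rw [this.fderiv]; rfl

lemma fderiv_zero_off {g : E3 → ℝ} {K : Set E3} (hKc : IsClosed K)
    (hvan : ∀ x ∉ K, g x = 0) {x : E3} (hx : x ∉ K) (v : E3) : fderiv ℝ g x v = 0 := by
  have h1 : fderiv ℝ g x = fderiv ℝ (fun _ : E3 => (0:ℝ)) x :=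
    Filter.EventuallyEq.fderiv_eq <|
      Filter.eventuallyEq_of_mem (hKc.isOpen_compl.mem_nhds hx) fun y hy => hvan y hy
  simp [h1]

/-- integral of a directional derivative of a C¹ compactly supported function vanishes. -/
lemma ibp_zero (g : E3 → ℝ) (hg : ContDiff ℝ 1 g) (hgs : HasCompactSupport g) (v : E3) :
    ∫ x, fderiv ℝ g x v = 0 := by
  obtain ⟨R, hR⟩ : ∃ R, tsupport g ⊆ closedBall 0 R :=
    hgs.isBounded.subset_closedBall 0
  have hR0 : 0 ≤ R ∨ tsupport g = ∅ := by
    rcases (tsupport g).eq_empty_or_nonempty with h | ⟨x, hx⟩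
    · exact Or.inr h
    · exact Or.inl (le_trans (norm_nonneg x) (by simpa [mem_closedBall, dist_eq_norm] using hR hx))
  rcases hR0 with hR0 | hempty
  swap
  · have : ∀ x, fderiv ℝ g x v = 0 := by
      intro x
      have : fderiv ℝ g x = 0 := by
        by_contra h
        exact absurd (support_fderiv_subset ℝ (f := g) h) (by simp [hempty])
      simp [this]
    simp [this]
  set f : ContDiffBump (0 : E3) := ⟨R + 1, R + 2, by linarith, by linarith⟩
  have hf : ContDiff ℝ 1 (f : E3 → ℝ) := f.contDiff
  have hfs : HasCompactSupport (f : E3 → ℝ) := f.hasCompactSupport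
  have hg' : Continuous fun x => fderiv ℝ g x v :=
    ((hg.continuous_fderiv one_ne_zero).clm_apply continuous_const)
  have hf' : Continuous fun x => fderiv ℝ (f : E3 → ℝ) x v :=
    ((hf.continuous_fderiv one_ne_zero).clm_apply continuous_const)
  have h1 : Integrable (fun x => fderiv ℝ (f : E3 → ℝ) x v * g x) :=
    (hf'.mul hg.continuous).integrable_of_hasCompactSupport (hgs.mul_left)
  have h2 : Integrable (fun x => (f : E3 → ℝ) x * fderiv ℝ g x v) :=
    (f.continuous.mul hg').integrable_of_hasCompactSupport (hfs.mul_right)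
  have h3 : Integrable (fun x => (f : E3 → ℝ) x * g x) :=
    (f.continuous.mul hg.continuous).integrable_of_hasCompactSupport (hgs.mul_left)
  have key := integral_mul_fderiv_eq_neg_fderiv_mul_of_integrable h1 h2 h3
    (fun x _ => hf.differentiable one_ne_zero x) (fun x _ => hg.differentiable one_ne_zero x)
  have e1 : ∀ x, (f : E3 → ℝ) x * fderiv ℝ g x v = fderiv ℝ g x v := by
    intro x
    by_cases hx : x ∈ tsupport g
    · rw [f.one_of_mem_closedBall
        (by simpa [mem_closedBall] using (mem_closedBall.mp (hR hx)).trans (by linarith))]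
      ring
    · have : fderiv ℝ g x = 0 := by
        by_contra h
        exact hx (support_fderiv_subset ℝ (f := g) h)
      simp [this]
  have e2 : ∀ x, fderiv ℝ (f : E3 → ℝ) x v * g x = 0 := by
    intro x
    by_cases hx : x ∈ tsupport g
    · have hx' : x ∈ ball (0 : E3) (R + 1) := by
        have := mem_closedBall.mp (hR hx)
        simp only [mem_ball]
        calc dist x 0 ≤ R := this
        _ < R + 1 := by linarith
      have : fderiv ℝ (f : E3 → ℝ) x = 0 := by
        have : Set.EqOn (f : E3 → ℝ) (fun _ => 1) (ball (0 : E3) (R + 1)) := fun y hy =>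
          f.one_of_mem_closedBall (ball_subset_closedBall hy)
        have h1 : fderiv ℝ (f : E3 → ℝ) x = fderiv ℝ (fun _ : E3 => (1:ℝ)) x :=
          Filter.EventuallyEq.fderiv_eq <|
            Filter.eventuallyEq_of_mem (isOpen_ball.mem_nhds hx') this
        simp [h1]
      simp [this]
    · simp [image_eq_zero_of_notMem_tsupport hx]
  rw [integral_congr_ae (Filter.Eventually.of_forall e2)] at key
  rw [integral_congr_ae (Filter.Eventually.of_forall e1)] at key
  simpa using key

lemma key_t (Ω : Set (EuclideanSpace ℝ (Fin 3))) (T ε μ : ℝ)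
    (u : ℝ × EuclideanSpace ℝ (Fin 3) → EuclideanSpace ℝ (Fin 3))
    (p : ℝ × EuclideanSpace ℝ (Fin 3) → ℝ)
    (hu : ContDiff ℝ 2 u) (hp : ContDiff ℝ 2 p)
    (K : Set (EuclideanSpace ℝ (Fin 3))) (hK : IsCompact K) (hKΩ : K ⊆ Ω)
    (hsupp : ∀ t ∈ Set.Icc (0:ℝ) T, ∀ x ∉ K, u (t, x) = 0 ∧ p (t, x) = 0)
    (hmom : ∀ t ∈ Set.Icc (0:ℝ) T, ∀ x ∈ Ω, ∀ i : Fin 3,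
      fderiv ℝ u (t, x) (1, 0) i + fderiv ℝ p (t, x) (0, EuclideanSpace.single i 1)
        = μ * (∑ j, fderiv ℝ (fun y => fderiv ℝ u y (0, EuclideanSpace.single j 1) i)
              (t, x) (0, EuclideanSpace.single j 1))
          - (∑ j, u (t, x) j * fderiv ℝ u (t, x) (0, EuclideanSpace.single j 1) i)
          - (1/2) * (∑ j, fderiv ℝ u (t, x) (0, EuclideanSpace.single j 1) j) * u (t, x) i)
    (hcont : ∀ t ∈ Set.Icc (0:ℝ) T, ∀ x ∈ Ω,
      ε * fderiv ℝ p (t, x) (1, 0)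
        + (∑ j, fderiv ℝ u (t, x) (0, EuclideanSpace.single j 1) j) = 0)
    (t : ℝ) (ht : t ∈ Set.Icc (0:ℝ) T) :
    ∫ x in K, (∑ i, u (t, x) i * fderiv ℝ u (t, x) (1, 0) i
        + ε * (p (t, x) * fderiv ℝ p (t, x) (1, 0)))
      = -μ * ∫ x in K, ∑ i, ∑ j,
          (fderiv ℝ u (t, x) (0, EuclideanSpace.single j 1) i) ^ 2 := by
  have hm : ContDiff ℝ 2 (fun x : E3 => ((t, x) : ℝ × E3)) := contDiff_const.prodMk contDiff_id
  set U : E3 → E3 := fun x => u (t, x) with hUdef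
  set P : E3 → ℝ := fun x => p (t, x) with hPdef
  have hUc : ContDiff ℝ 2 U := hu.comp hm
  have hPc : ContDiff ℝ 2 P := hp.comp hm
  set uc : Fin 3 → E3 → ℝ := fun i x => U x i with hucdef
  have hucc : ∀ i, ContDiff ℝ 2 (uc i) := fun i =>
    ((EuclideanSpace.proj i).contDiff.comp hUc : ContDiff ℝ 2 ((EuclideanSpace.proj i) ∘ U))
  -- first derivative slices
  have hslc : ∀ (x : E3) (i : Fin 3) (v : E3),
      fderiv ℝ (uc i) x v = fderiv ℝ u (t, x) (0, v) i := by
    intro x i v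
    rw [fderiv_proj ((hUc.differentiable two_ne_zero) x) i v]
    have := fderiv_slice_space (w := u) (t := t) (x := x)
      ((hu.differentiable two_ne_zero) (t, x)) v
    rw [this]
  have hslP : ∀ (x : E3) (v : E3), fderiv ℝ P x v = fderiv ℝ p (t, x) (0, v) := fun x v =>
    fderiv_slice_space ((hp.differentiable two_ne_zero) (t, x)) v
  -- second derivative slices
  have hw1 : ∀ (i j : Fin 3), ContDiff ℝ 1
      (fun y => fderiv ℝ u y (0, EuclideanSpace.single j 1) i) := by
    intro i j
    have huf : ContDiff ℝ 1 (fderiv ℝ u) := hu.fderiv_right (le_refl 2)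
    exact ((EuclideanSpace.proj i).contDiff.comp (huf.clm_apply contDiff_const) :
      ContDiff ℝ 1 ((EuclideanSpace.proj i) ∘ fun y => fderiv ℝ u y (0, EuclideanSpace.single j 1)))
  have hsl2 : ∀ (x : E3) (i j : Fin 3),
      fderiv ℝ (fun x' => fderiv ℝ (uc i) x' (EuclideanSpace.single j 1)) x
          (EuclideanSpace.single j 1)
        = fderiv ℝ (fun y => fderiv ℝ u y (0, EuclideanSpace.single j 1) i) (t, x)
            (0, EuclideanSpace.single j 1) := by
    intro x i j
    have heq : (fun x' => fderiv ℝ (uc i) x' (EuclideanSpace.single j 1))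
        = fun x' => fderiv ℝ u (t, x') (0, EuclideanSpace.single j 1) i :=
      funext fun x' => hslc x' i _
    rw [heq]
    exact fderiv_slice_space ((hw1 i j).differentiable one_ne_zero (t, x)) _
  -- vanishing off K
  have hvanU : ∀ x ∉ K, ∀ i, uc i x = 0 := fun x hx i => by
    simp [hucdef, hUdef, (hsupp t ht x hx).1]
  have hvanP : ∀ x ∉ K, P x = 0 := fun x hx => (hsupp t ht x hx).2
  have hvand : ∀ x ∉ K, ∀ (i : Fin 3) (v : E3), fderiv ℝ (uc i) x v = 0 := fun x hx i v =>
    fderiv_zero_off hK.isClosed (fun y hy => hvanU y hy i) hx v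
  -- the divergence fields
  set Wf : Fin 3 → E3 → ℝ := fun j x =>
    μ * (∑ i, uc i x * fderiv ℝ (uc i) x (EuclideanSpace.single j 1))
      - ((1:ℝ)/2 * ∑ i, uc i x * uc i x) * uc j x - P x * uc j x with hWfdef
  have hd1 : ∀ i j, ContDiff ℝ 1 (fun x => fderiv ℝ (uc i) x (EuclideanSpace.single j 1)) := by
    intro i j
    exact ((hucc i).fderiv_right (le_refl 2)).clm_apply contDiff_const
  have hWc1 : ∀ j, ContDiff ℝ 1 (Wf j) := by
    intro j
    refine ContDiff.sub (ContDiff.sub (contDiff_const.mul ?_) (ContDiff.mul ?_ ?_))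
      (ContDiff.mul (hPc.of_le one_le_two) ((hucc j).of_le one_le_two))
    · exact ContDiff.sum fun i _ => ((hucc i).of_le one_le_two).mul (hd1 i j)
    · exact contDiff_const.mul (ContDiff.sum fun i _ =>
        ((hucc i).of_le one_le_two).mul ((hucc i).of_le one_le_two))
    · exact (hucc j).of_le one_le_two
  have hWvan : ∀ j, ∀ x ∉ K, Wf j x = 0 := by
    intro j x hx
    simp [hWfdef, hvanU x hx, hvanP x hx]
  have hWsupp : ∀ j, HasCompactSupport (Wf j) := fun j =>
    HasCompactSupport.intro hK (hWvan j)
  have hibp : ∀ j, ∫ x, fderiv ℝ (Wf j) x (EuclideanSpace.single j 1) = 0 := fun j =>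
    ibp_zero (Wf j) (hWc1 j) (hWsupp j) _
  have hdivvan : ∀ j, ∀ x ∉ K, fderiv ℝ (Wf j) x (EuclideanSpace.single j 1) = 0 := fun j x hx =>
    fderiv_zero_off hK.isClosed (hWvan j) hx _
  -- pointwise identity on K
  have hpt : ∀ x ∈ K,
      (∑ i, u (t, x) i * fderiv ℝ u (t, x) (1, 0) i
        + ε * (p (t, x) * fderiv ℝ p (t, x) (1, 0)))
      = (∑ j, fderiv ℝ (Wf j) x (EuclideanSpace.single j 1))
        - μ * ∑ i, ∑ j, (fderiv ℝ u (t, x) (0, EuclideanSpace.single j 1) i) ^ 2 := by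
    intro x hx
    have hxΩ : x ∈ Ω := hKΩ hx
    have hdu : ∀ i, HasFDerivAt (uc i) (fderiv ℝ (uc i) x) x := fun i =>
      ((hucc i).differentiable two_ne_zero x).hasFDerivAt
    have hdv : ∀ i j, HasFDerivAt (fun x' => fderiv ℝ (uc i) x' (EuclideanSpace.single j 1))
        (fderiv ℝ (fun x' => fderiv ℝ (uc i) x' (EuclideanSpace.single j 1)) x) x := fun i j =>
      ((hd1 i j).differentiable one_ne_zero x).hasFDerivAt
    have hdP : HasFDerivAt P (fderiv ℝ P x) x := ((hPc.differentiable two_ne_zero) x).hasFDerivAt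
    have hWj : ∀ j, HasFDerivAt (Wf j)
        ((μ • (∑ i : Fin 3, (uc i x • fderiv ℝ
            (fun x' => fderiv ℝ (uc i) x' (EuclideanSpace.single j 1)) x
          + fderiv ℝ (uc i) x (EuclideanSpace.single j 1) • fderiv ℝ (uc i) x)))
         - (((1:ℝ)/2 * ∑ i, uc i x * uc i x) • fderiv ℝ (uc j) x
            + uc j x • (((1:ℝ)/2) • (∑ i : Fin 3, (uc i x • fderiv ℝ (uc i) x
                + uc i x • fderiv ℝ (uc i) x))))
         - (P x • fderiv ℝ (uc j) x + uc j x • fderiv ℝ P x)) x := fun j =>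
      (((HasFDerivAt.fun_sum (fun i _ => (hdu i).mul (hdv i j))).const_mul μ).sub
        (((HasFDerivAt.fun_sum (fun i (_ : i ∈ Finset.univ) => (hdu i).mul (hdu i))).const_mul
          ((1:ℝ)/2)).mul (hdu j))).sub
        (hdP.mul (hdu j))
    have hval : ∀ j, fderiv ℝ (Wf j) x (EuclideanSpace.single j 1)
        = μ * (∑ i, (u (t, x) i
              * fderiv ℝ (fun y => fderiv ℝ u y (0, EuclideanSpace.single j 1) i) (t, x)
                  (0, EuclideanSpace.single j 1)
            + fderiv ℝ u (t, x) (0, EuclideanSpace.single j 1) i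
              * fderiv ℝ u (t, x) (0, EuclideanSpace.single j 1) i))
          - (((1:ℝ)/2 * ∑ i, u (t, x) i * u (t, x) i)
              * fderiv ℝ u (t, x) (0, EuclideanSpace.single j 1) j
            + u (t, x) j * (((1:ℝ)/2)
              * (∑ i, (u (t, x) i * fderiv ℝ u (t, x) (0, EuclideanSpace.single j 1) i
                + u (t, x) i * fderiv ℝ u (t, x) (0, EuclideanSpace.single j 1) i))))
          - (p (t, x) * fderiv ℝ u (t, x) (0, EuclideanSpace.single j 1) j
            + u (t, x) j * fderiv ℝ p (t, x) (0, EuclideanSpace.single j 1)) := by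
      intro j
      rw [(hWj j).fderiv]
      simp only [ContinuousLinearMap.coe_sub', Pi.sub_apply, ContinuousLinearMap.add_apply,
        ContinuousLinearMap.coe_smul', Pi.smul_apply, ContinuousLinearMap.coe_sum',
        Finset.sum_apply, smul_eq_mul]
      simp only [hsl2]
      simp only [hslc, hslP]
      rfl
    simp only [hval]
    have hm1 := fun i => hmom t ht x hxΩ i
    have hc1 := hcont t ht x hxΩ
    simp only [Fin.sum_univ_three] at hm1 hc1 ⊢
    linear_combination (u (t, x) 0) * hm1 0 + (u (t, x) 1) * hm1 1 + (u (t, x) 2) * hm1 2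
      + (p (t, x)) * hc1
  -- integrability facts
  have hcont_b : Continuous fun x : E3 =>
      ∑ i, ∑ j, (fderiv ℝ u (t, x) (0, EuclideanSpace.single j 1) i) ^ 2 := by
    refine continuous_finset_sum _ fun i _ => continuous_finset_sum _ fun j _ => ?_
    have : Continuous fun x : E3 => fderiv ℝ u (t, x) (0, EuclideanSpace.single j 1) i :=
      ((hw1 i j).continuous).comp (continuous_const.prodMk continuous_id)
    exact this.pow 2
  have hcont_div : ∀ j, Continuous fun x => fderiv ℝ (Wf j) x (EuclideanSpace.single j 1) :=
    fun j => ((hWc1 j).continuous_fderiv one_ne_zero).clm_apply continuous_const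
  have int_b : IntegrableOn (fun x : E3 =>
      ∑ i, ∑ j, (fderiv ℝ u (t, x) (0, EuclideanSpace.single j 1) i) ^ 2) K :=
    hcont_b.continuousOn.integrableOn_compact hK
  have int_div : IntegrableOn
      (fun x => ∑ j, fderiv ℝ (Wf j) x (EuclideanSpace.single j 1)) K :=
    (continuous_finset_sum _ fun j _ => hcont_div j).continuousOn.integrableOn_compact hK
  have hdiv0 : ∫ x in K, ∑ j, fderiv ℝ (Wf j) x (EuclideanSpace.single j 1) = 0 := by
    rw [setIntegral_eq_integral_of_forall_compl_eq_zero
      (fun x hx => by simp [fun j => hdivvan j x hx])]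
    rw [integral_finset_sum _ (fun j _ => (hcont_div j).integrable_of_hasCompactSupport
      (HasCompactSupport.intro hK (hdivvan j)))]
    simp [hibp]
  calc ∫ x in K, (∑ i, u (t, x) i * fderiv ℝ u (t, x) (1, 0) i
        + ε * (p (t, x) * fderiv ℝ p (t, x) (1, 0)))
      = ∫ x in K, ((∑ j, fderiv ℝ (Wf j) x (EuclideanSpace.single j 1))
        - μ * ∑ i, ∑ j, (fderiv ℝ u (t, x) (0, EuclideanSpace.single j 1) i) ^ 2) :=
        setIntegral_congr_fun hK.measurableSet hpt
    _ = (∫ x in K, ∑ j, fderiv ℝ (Wf j) x (EuclideanSpace.single j 1))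
        - ∫ x in K, μ * ∑ i, ∑ j,
            (fderiv ℝ u (t, x) (0, EuclideanSpace.single j 1) i) ^ 2 :=
        integral_sub int_div (int_b.const_mul μ)
    _ = -μ * ∫ x in K, ∑ i, ∑ j,
            (fderiv ℝ u (t, x) (0, EuclideanSpace.single j 1) i) ^ 2 := by
        rw [hdiv0, MeasureTheory.integral_const_mul]; ring


/-- **Energy identity for the artificial compressibility system.**
If `(u,p)` is a `C²` solution on `[0,T] × Ω` of
`∂ₜu + ∇p = μΔu − (u·∇)u − ½(div u)u`, `ε∂ₜp + div u = 0`,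
with `u, p` vanishing (for `t ∈ [0,T]`) outside a compact `K ⊆ Ω`, then the energy
`E(t) = ∫_Ω (½|u|² + (ε/2)p²) dx` satisfies
`E(t) + μ ∫₀ᵗ ∫_Ω |∇u|² dx ds = E(0)` for all `t ∈ [0,T]`. -/
theorem stmt_4 (Ω : Set (EuclideanSpace ℝ (Fin 3))) (hΩ : IsOpen Ω)
    (T ε μ : ℝ) (hT : 0 < T) (hε : 0 < ε) (hμ : 0 < μ)
    (u : ℝ × EuclideanSpace ℝ (Fin 3) → EuclideanSpace ℝ (Fin 3))
    (p : ℝ × EuclideanSpace ℝ (Fin 3) → ℝ)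
    (hu : ContDiff ℝ 2 u) (hp : ContDiff ℝ 2 p)
    (K : Set (EuclideanSpace ℝ (Fin 3))) (hK : IsCompact K) (hKΩ : K ⊆ Ω)
    (hsupp : ∀ t ∈ Set.Icc (0:ℝ) T, ∀ x ∉ K, u (t, x) = 0 ∧ p (t, x) = 0)
    -- momentum equation, componentwise: ∂ₜuᵢ + ∂ᵢp = μΔuᵢ − ((u·∇)u)ᵢ − ½(div u)uᵢ
    (hmom : ∀ t ∈ Set.Icc (0:ℝ) T, ∀ x ∈ Ω, ∀ i : Fin 3,
      fderiv ℝ u (t, x) (1, 0) i + fderiv ℝ p (t, x) (0, EuclideanSpace.single i 1)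
        = μ * (∑ j, fderiv ℝ (fun y => fderiv ℝ u y (0, EuclideanSpace.single j 1) i)
              (t, x) (0, EuclideanSpace.single j 1))
          - (∑ j, u (t, x) j * fderiv ℝ u (t, x) (0, EuclideanSpace.single j 1) i)
          - (1/2) * (∑ j, fderiv ℝ u (t, x) (0, EuclideanSpace.single j 1) j) * u (t, x) i)
    -- continuity equation: ε∂ₜp + div u = 0
    (hcont : ∀ t ∈ Set.Icc (0:ℝ) T, ∀ x ∈ Ω,
      ε * fderiv ℝ p (t, x) (1, 0)
        + (∑ j, fderiv ℝ u (t, x) (0, EuclideanSpace.single j 1) j) = 0) :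
    ∀ t ∈ Set.Icc (0:ℝ) T,
      (∫ x in Ω, ((1/2) * ∑ i, (u (t, x) i) ^ 2 + (ε / 2) * (p (t, x)) ^ 2))
        + μ * ∫ s in (0:ℝ)..t, (∫ x in Ω,
            ∑ i, ∑ j, (fderiv ℝ u (s, x) (0, EuclideanSpace.single j 1) i) ^ 2)
      = ∫ x in Ω, ((1/2) * ∑ i, (u (0, x) i) ^ 2 + (ε / 2) * (p (0, x)) ^ 2) := by
  have hu1 : Differentiable ℝ u := hu.differentiable two_ne_zero
  have hp1 : Differentiable ℝ p := hp.differentiable two_ne_zero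
  -- energy density and its time derivative
  set g : ℝ × E3 → ℝ := fun y => (1/2) * ∑ i, (u y i) ^ 2 + (ε / 2) * (p y) ^ 2 with hgdef
  set g' : ℝ × E3 → ℝ := fun y =>
    ∑ i, u y i * fderiv ℝ u y (1, 0) i + ε * (p y * fderiv ℝ p y (1, 0)) with hg'def
  have hgc : Continuous g := by
    refine Continuous.add (continuous_const.mul (continuous_finset_sum _ fun i _ => ?_))
      (continuous_const.mul ((hp.continuous).pow 2))
    exact (((EuclideanSpace.proj i).continuous.comp hu.continuous)).pow 2
  have hτc : ∀ i : Fin 3, Continuous fun y => fderiv ℝ u y (1, 0) i := fun i =>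
    (EuclideanSpace.proj i).continuous.comp
      ((hu.continuous_fderiv two_ne_zero).clm_apply continuous_const)
  have hσc : Continuous fun y => fderiv ℝ p y (1, 0) :=
    (hp.continuous_fderiv two_ne_zero).clm_apply continuous_const
  have hg'c : Continuous g' := by
    refine Continuous.add (continuous_finset_sum _ fun i _ => Continuous.mul ?_ (hτc i))
      (continuous_const.mul (hp.continuous.mul hσc))
    exact (EuclideanSpace.proj i).continuous.comp hu.continuous
  have hdiff : ∀ (t : ℝ) (x : E3), HasDerivAt (fun s => g (s, x)) (g' (t, x)) t := by
    intro t x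
    have hcomp : ∀ i : Fin 3, HasDerivAt (fun s => u (s, x) i)
        (fderiv ℝ u (t, x) (1, 0) i) t := fun i =>
      ((EuclideanSpace.proj i).hasFDerivAt.comp_hasDerivAt t (slice_time (hu1 (t, x))) :
        HasDerivAt ((EuclideanSpace.proj i) ∘ fun s => u (s, x)) _ t)
    have hPd : HasDerivAt (fun s => p (s, x)) (fderiv ℝ p (t, x) (1, 0)) t :=
      slice_time (hp1 (t, x))
    have := ((HasDerivAt.fun_sum (fun i (_ : i ∈ Finset.univ) => (hcomp i).pow 2)).const_mul
        ((1:ℝ)/2)).add ((hPd.pow 2).const_mul (ε/2))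
    refine this.congr_deriv ?_
    simp only [Fin.sum_univ_three, pow_one, hg'def]
    ring
  -- E tilde and its derivative
  have hE : ∀ t : ℝ, HasDerivAt (fun t => ∫ x in K, g (t, x)) (∫ x in K, g' (t, x)) t :=
    fun t => hasDerivAt_param_integral hgc hg'c hK hdiff t
  -- D tilde
  set b : ℝ × E3 → ℝ := fun y =>
    ∑ i, ∑ j, (fderiv ℝ u y (0, EuclideanSpace.single j 1) i) ^ 2 with hbdef
  have hbc : Continuous b := by
    refine continuous_finset_sum _ fun i _ => continuous_finset_sum _ fun j _ => Continuous.pow ?_ 2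
    exact (EuclideanSpace.proj i).continuous.comp
      ((hu.continuous_fderiv two_ne_zero).clm_apply continuous_const)
  set D : ℝ → ℝ := fun s => ∫ x in K, b (s, x) with hDdef
  have hDc : Continuous D := cont_param_integral hbc hK
  -- the function Phi is constant on [0,T]
  set Φ : ℝ → ℝ := fun t => (∫ x in K, g (t, x)) + μ * ∫ s in (0:ℝ)..t, D s with hΦdef
  have hΦd : ∀ t ∈ Set.Icc (0:ℝ) T, HasDerivAt Φ 0 t := by
    intro t ht
    have h1 : HasDerivAt (fun t => ∫ s in (0:ℝ)..t, D s) (D t) t :=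
      (hDc.integral_hasStrictDerivAt 0 t).hasDerivAt
    have h2 := (hE t).add ((h1.const_mul μ))
    have h3 : ∫ x in K, g' (t, x) = -μ * D t := by
      simpa [hg'def, hDdef, hbdef] using
        key_t Ω T ε μ u p hu hp K hK hKΩ hsupp hmom hcont t ht
    rw [h3] at h2
    have h4 : HasDerivAt Φ (-μ * D t + μ * D t) t := h2
    simpa using h4
  have hΦconst : ∀ t ∈ Set.Icc (0:ℝ) T, Φ t = Φ 0 := by
    have hcontΦ : ContinuousOn Φ (Set.Icc 0 T) := by
      intro s hs
      exact ((hΦd s hs).continuousAt).continuousWithinAt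
    exact fun t ht => constant_of_has_deriv_right_zero hcontΦ
      (fun s hs => ((hΦd s (Set.mem_Icc_of_Ico hs)).hasDerivWithinAt)) t ht
  -- translating Ω-integrals to K-integrals
  have hvan_g : ∀ t ∈ Set.Icc (0:ℝ) T, ∀ x ∉ K, g (t, x) = 0 := by
    intro t ht x hx
    simp [hgdef, (hsupp t ht x hx).1, (hsupp t ht x hx).2]
  have hEeq : ∀ t ∈ Set.Icc (0:ℝ) T,
      (∫ x in Ω, g (t, x)) = ∫ x in K, g (t, x) := by
    intro t ht
    rw [setIntegral_eq_integral_of_forall_compl_eq_zero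
      (fun x hx => hvan_g t ht x (fun hxK => hx (hKΩ hxK))),
      setIntegral_eq_integral_of_forall_compl_eq_zero (fun x hx => hvan_g t ht x hx)]
  have hvan_b : ∀ s ∈ Set.Icc (0:ℝ) T, ∀ x ∉ K, b (s, x) = 0 := by
    intro s hs x hx
    have hz : ∀ (i j : Fin 3), fderiv ℝ u (s, x) (0, EuclideanSpace.single j 1) i = 0 := by
      intro i j
      have hdU : DifferentiableAt ℝ (fun y : E3 => u (s, y)) x :=
        ((hu.comp (contDiff_const.prodMk contDiff_id) :
          ContDiff ℝ 2 fun y : E3 => u (s, y))).differentiable two_ne_zero x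
      have hproj := fderiv_proj (U := fun y : E3 => u (s, y)) hdU i (EuclideanSpace.single j 1)
      have hslice := fderiv_slice_space (w := u) (hu1 (s, x)) (EuclideanSpace.single j 1)
      have h1 : fderiv ℝ u (s, x) (0, EuclideanSpace.single j 1) i
          = fderiv ℝ (fun y => u (s, y) i) x (EuclideanSpace.single j 1) := by
        rw [hproj, hslice]
      rw [h1]
      exact fderiv_zero_off hK.isClosed
        (fun y hy => by simp [(hsupp s hs y hy).1]) hx _
    simp [hbdef, hz]
  have hDeq : ∀ s ∈ Set.Icc (0:ℝ) T, (∫ x in Ω, b (s, x)) = D s := by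
    intro s hs
    have h1 : (∫ x in Ω, b (s, x)) = ∫ x : E3, b (s, x) :=
      setIntegral_eq_integral_of_forall_compl_eq_zero
        (fun x hx => hvan_b s hs x (fun hxK => hx (hKΩ hxK)))
    have h2 : (∫ x in K, b (s, x)) = ∫ x : E3, b (s, x) :=
      setIntegral_eq_integral_of_forall_compl_eq_zero (fun x hx => hvan_b s hs x hx)
    exact h1.trans h2.symm
  -- conclusion
  intro t ht
  have h0T : (0:ℝ) ∈ Set.Icc (0:ℝ) T := Set.mem_Icc.2 ⟨le_rfl, hT.le⟩
  have hIeq : (∫ s in (0:ℝ)..t, (∫ x in Ω, b (s, x))) = ∫ s in (0:ℝ)..t, D s := by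
    refine intervalIntegral.integral_congr fun s hs => ?_
    rw [Set.uIcc_of_le ht.1] at hs
    exact hDeq s ⟨hs.1, hs.2.trans ht.2⟩
  have := hΦconst t ht
  rw [hΦdef] at this
  simp only at this
  calc (∫ x in Ω, ((1/2) * ∑ i, (u (t, x) i) ^ 2 + (ε / 2) * (p (t, x)) ^ 2))
        + μ * ∫ s in (0:ℝ)..t, (∫ x in Ω,
            ∑ i, ∑ j, (fderiv ℝ u (s, x) (0, EuclideanSpace.single j 1) i) ^ 2)
      = (∫ x in K, g (t, x)) + μ * ∫ s in (0:ℝ)..t, D s := by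
        rw [← hEeq t ht, ← hIeq]
    _ = (∫ x in K, g (0, x)) + μ * ∫ s in (0:ℝ)..(0:ℝ), D s := by
        simpa using this
    _ = ∫ x in Ω, ((1/2) * ∑ i, (u (0, x) i) ^ 2 + (ε / 2) * (p (0, x)) ^ 2) := by
        rw [← hEeq 0 h0T]
        simp [hgdef]
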